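/- For integers 1 ≤ m ≤ n and an indeterminate λ, the identity sum_{i=m}^{n} sum_{j=m}^{i} (-1)^{m+i} [n,i] C(i,j) {j,m} λ^{i-j} 2^{j-m} = (n!/m!) * (-1)^{m+n} * sum_{ℓ=m}^{n} C(λ, n-ℓ) C(m, ℓ-m) 2^{m-ℓ} holds in ℚ[λ]. -/

import Mathlib

open Finset

/-- Unsigned Stirling numbers of the first kind. -/
def stirling1 : ℕ → ℕ → ℕ
  | 0, 0 => 1
  | 0, _ + 1 => 0
  | _ + 1, 0 => 0
  | n + 1, k + 1 => n * stirling1 n (k + 1) + stirling1 n k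

/-- Stirling numbers of the second kind. -/
def stirling2 : ℕ → ℕ → ℕ
  | 0, 0 => 1
  | 0, _ + 1 => 0
  | _ + 1, 0 => 0
  | n + 1, k + 1 => (k + 1) * stirling2 n (k + 1) + stirling2 n k

/-- Generalized binomial coefficient `C(x, r) = x(x-1)⋯(x-r+1)/r!` in a ℚ-algebra. -/
noncomputable def gchoose {R : Type*} [CommRing R] [Algebra ℚ R] (x : R) (r : ℕ) : R :=
  algebraMap ℚ R ((r.factorial : ℚ)⁻¹) * ∏ i ∈ Finset.range r, (x - i)

/- basic vanishing lemmas -/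
lemma stirling1_eq_zero : ∀ {n k : ℕ}, n < k → stirling1 n k = 0 := by
  intro n
  induction n with
  | zero => intro k hk; cases k with
    | zero => omega
    | succ k => rfl
  | succ n ih => intro k hk; cases k with
    | zero => omega
    | succ k =>
      show n * stirling1 n (k+1) + stirling1 n k = 0
      rw [ih (by omega), ih (by omega)]; simp

lemma stirling2_eq_zero : ∀ {n k : ℕ}, n < k → stirling2 n k = 0 := by
  intro n
  induction n with
  | zero => intro k hk; cases k with
    | zero => omega
    | succ k => rfl
  | succ n ih => intro k hk; cases k with
    | zero => omega
    | succ k =>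
      show (k+1) * stirling2 n (k+1) + stirling2 n k = 0
      rw [ih (by omega), ih (by omega)]; simp

lemma stirling1_zero_right : ∀ n : ℕ, n * stirling1 n 0 = 0 := by
  intro n; cases n with
  | zero => simp
  | succ n => show (n+1) * 0 = 0; simp

/- rising factorial generating function of stirling1 -/
lemma stirling1_gen (n : ℕ) (x : ℚ) :
    ∑ i ∈ range (n+1), (stirling1 n i : ℚ) * x ^ i = ∏ t ∈ range n, (x + t) := by
  induction n generalizing x with
  | zero => simp [stirling1]
  | succ n ih =>
    rw [Finset.sum_range_succ']
    have h1 : ∀ i, (stirling1 (n+1) (i+1) : ℚ) = n * stirling1 n (i+1) + stirling1 n i := by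
      intro i; show ((n * stirling1 n (i + 1) + stirling1 n i : ℕ) : ℚ) = _; push_cast; ring
    have h0 : (stirling1 (n+1) 0 : ℚ) = 0 := by
      cases n <;> rfl
    have hS1 : ∑ i ∈ range (n+1), (stirling1 n (i+1) : ℚ) * x ^ (i+1)
        = (∏ t ∈ range n, (x + t)) - (stirling1 n 0 : ℚ) := by
      have := Finset.sum_range_succ' (fun i => (stirling1 n i : ℚ) * x ^ i) (n+1)
      rw [Finset.sum_range_succ _ (n+1), ih, stirling1_eq_zero (by omega)] at this
      push_cast at this ⊢
      linarith [this]
    calc (∑ i ∈ range (n+1), (stirling1 (n+1) (i+1) : ℚ) * x ^ (i+1))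
          + (stirling1 (n+1) 0 : ℚ) * x ^ 0
        = ∑ i ∈ range (n+1), ((n : ℚ) * (stirling1 n (i+1) * x ^ (i+1))
            + x * ((stirling1 n i : ℚ) * x ^ i)) := by
          rw [h0, zero_mul, add_zero]
          simp only [h1]
          exact Finset.sum_congr rfl (fun i _ => by ring)
      _ = (n : ℚ) * (∑ i ∈ range (n+1), (stirling1 n (i+1) : ℚ) * x ^ (i+1))
            + x * ∑ i ∈ range (n+1), (stirling1 n i : ℚ) * x ^ i := by
          rw [Finset.sum_add_distrib, Finset.mul_sum, Finset.mul_sum]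
      _ = (n : ℚ) * ((∏ t ∈ range n, (x + t)) - (stirling1 n 0 : ℚ))
            + x * ∏ t ∈ range n, (x + t) := by rw [hS1, ih]
      _ = ∏ t ∈ range (n+1), (x + t) := by
          rw [Finset.prod_range_succ]
          have : ((n * stirling1 n 0 : ℕ) : ℚ) = 0 := by rw [stirling1_zero_right]; simp
          push_cast at this
          ring_nf
          nlinarith [this]

lemma desc_smeval (n : ℕ) (x : ℚ) :
    (descPochhammer ℤ n).smeval x = ∏ t ∈ Finset.range n, (x - t) := by
  induction n with
  | zero => simp [descPochhammer_zero, Polynomial.smeval_one]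
  | succ n ih =>
    rw [descPochhammer_succ_right, Polynomial.smeval_mul, ih, Finset.prod_range_succ,
      Polynomial.smeval_sub, Polynomial.smeval_X, Polynomial.smeval_natCast]
    simp

lemma gchoose_prod (x : ℚ) (n : ℕ) :
    (n.factorial : ℚ) * gchoose x n = ∏ t ∈ range n, (x - t) := by
  have h : (n.factorial : ℚ) ≠ 0 := by positivity
  simp only [gchoose, Algebra.algebraMap_self, RingHom.id_apply]
  field_simp

lemma gchoose_eq_choose (x : ℚ) (n : ℕ) : gchoose x n = Ring.choose x n := by
  have h := Ring.descPochhammer_eq_factorial_smul_choose x n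
  rw [desc_smeval, nsmul_eq_mul] at h
  have h2 := gchoose_prod x n
  have h3 : (n.factorial : ℚ) ≠ 0 := by positivity
  have : (n.factorial : ℚ) * gchoose x n = (n.factorial : ℚ) * Ring.choose x n := by
    rw [h2, h]
  exact mul_left_cancel₀ h3 this

lemma stirling1_alt (n : ℕ) (x : ℚ) :
    ∑ i ∈ range (n+1), (-1:ℚ)^i * stirling1 n i * x ^ i
      = (-1:ℚ)^n * ((n.factorial : ℚ) * gchoose x n) := by
  have h := stirling1_gen n (-x)
  rw [gchoose_prod]
  calc ∑ i ∈ range (n+1), (-1:ℚ)^i * stirling1 n i * x ^ i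
      = ∑ i ∈ range (n+1), (stirling1 n i : ℚ) * (-x) ^ i := by
        refine Finset.sum_congr rfl (fun i _ => ?_)
        rw [neg_pow]; ring
    _ = ∏ t ∈ range n, (-x + t) := h
    _ = (-1:ℚ)^n * ∏ t ∈ range n, (x - t) := by
        have : ∀ t ∈ range n, -x + (t:ℚ) = (-1) * (x - t) := fun t _ => by ring
        rw [Finset.prod_congr rfl this, Finset.prod_mul_distrib, Finset.prod_const,
          Finset.card_range]

lemma alt_sum_choose (m : ℕ) :
    ∑ k ∈ range (m+1), (-1:ℚ)^k * m.choose k = if m = 0 then 1 else 0 := by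
  have h := @Int.alternating_sum_range_choose m
  have h2 := congrArg (fun z : ℤ => (z : ℚ)) h
  simp only [Int.cast_sum, Int.cast_mul, Int.cast_pow, Int.cast_neg, Int.cast_one,
    Int.cast_natCast, apply_ite (Int.cast : ℤ → ℚ), Int.cast_zero] at h2
  exact h2

lemma alt_shift (j m : ℕ) :
    ∑ k ∈ range (m+1), (-1:ℚ)^k * m.choose k * ((k:ℚ)+1)^j
      = -(∑ k ∈ range (m+2), (-1:ℚ)^k * ((m+1).choose k) * (k:ℚ)^j)
        + ∑ k ∈ range (m+1), (-1:ℚ)^k * m.choose k * (k:ℚ)^j := by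
  have hB : ∑ k ∈ range (m+2), (-1:ℚ)^k * (m.choose k) * (k:ℚ)^j
      = (∑ k ∈ range (m+1), (-1:ℚ)^(k+1) * (m.choose (k+1)) * ((k:ℚ)+1)^j) + (0:ℚ)^j := by
    rw [Finset.sum_range_succ']
    push_cast
    simp
  have hB2 : ∑ k ∈ range (m+2), (-1:ℚ)^k * (m.choose k) * (k:ℚ)^j
      = ∑ k ∈ range (m+1), (-1:ℚ)^k * (m.choose k) * (k:ℚ)^j := by
    rw [Finset.sum_range_succ, Nat.choose_succ_self]
    simp
  have hA : ∑ k ∈ range (m+2), (-1:ℚ)^k * ((m+1).choose k) * (k:ℚ)^j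
      = (∑ k ∈ range (m+1), (-1:ℚ)^(k+1) * ((m+1).choose (k+1)) * ((k:ℚ)+1)^j) + (0:ℚ)^j := by
    rw [Finset.sum_range_succ']
    push_cast
    simp
  have hP : ∀ k, (((m+1).choose (k+1) : ℕ) : ℚ) = (m.choose k : ℚ) + (m.choose (k+1) : ℚ) := by
    intro k; rw [Nat.choose_succ_succ]; push_cast; ring
  rw [hA]
  have : ∑ k ∈ range (m+1), (-1:ℚ)^(k+1) * ((m+1).choose (k+1)) * ((k:ℚ)+1)^j
      = -(∑ k ∈ range (m+1), (-1:ℚ)^k * (m.choose k) * ((k:ℚ)+1)^j)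
        + ∑ k ∈ range (m+1), (-1:ℚ)^(k+1) * (m.choose (k+1)) * ((k:ℚ)+1)^j := by
    rw [← Finset.sum_neg_distrib, ← Finset.sum_add_distrib]
    refine Finset.sum_congr rfl (fun k _ => ?_)
    rw [hP k]; ring
  rw [this]
  have hBval : ∑ k ∈ range (m+1), (-1:ℚ)^(k+1) * (m.choose (k+1)) * ((k:ℚ)+1)^j
      = (∑ k ∈ range (m+1), (-1:ℚ)^k * (m.choose k) * (k:ℚ)^j) - (0:ℚ)^j := by
    have := hB.symm.trans hB2
    linarith
  rw [hBval]
  ring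

lemma stirling2_alt (j : ℕ) : ∀ m : ℕ,
    (m.factorial : ℚ) * stirling2 j m
      = (-1:ℚ)^m * ∑ k ∈ range (m+1), (-1:ℚ)^k * m.choose k * (k:ℚ)^j := by
  induction j with
  | zero =>
    intro m
    cases m with
    | zero => simp [stirling2]
    | succ m' =>
      have : stirling2 0 (m'+1) = 0 := rfl
      rw [this]
      have : ∑ k ∈ range (m'+2), (-1:ℚ)^k * ((m'+1).choose k) * (k:ℚ)^0
          = ∑ k ∈ range (m'+2), (-1:ℚ)^k * ((m'+1).choose k) :=
        Finset.sum_congr rfl (fun k _ => by rw [pow_zero, mul_one])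
      rw [this, alt_sum_choose (m'+1)]
      simp
  | succ j ih =>
    intro m
    cases m with
    | zero =>
      have : stirling2 (j+1) 0 = 0 := rfl
      rw [this]
      simp
    | succ m' =>
      have hrec : (stirling2 (j+1) (m'+1) : ℚ)
          = (m'+1) * stirling2 j (m'+1) + stirling2 j m' := by
        show (((m'+1) * stirling2 j (m'+1) + stirling2 j m' : ℕ) : ℚ) = _
        push_cast; ring
      have hF : ∑ k ∈ range (m'+2), (-1:ℚ)^k * ((m'+1).choose k) * (k:ℚ)^(j+1)
          = -((m'+1) * ∑ k ∈ range (m'+1), (-1:ℚ)^k * (m'.choose k) * ((k:ℚ)+1)^j) := by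
        rw [Finset.sum_range_succ']
        push_cast
        rw [Finset.mul_sum, ← Finset.sum_neg_distrib]
        have : ∀ k ∈ range (m'+1),
            (-1:ℚ)^(k+1) * ((m'+1).choose (k+1)) * ((k:ℚ)+1)^(j+1)
              = -((m'+1) * ((-1:ℚ)^k * (m'.choose k) * ((k:ℚ)+1)^j)) := by
          intro k _
          have hc : (((m'+1).choose (k+1) * (k+1) : ℕ) : ℚ)
              = (((m'+1) * m'.choose k : ℕ) : ℚ) := by
            rw [← Nat.add_one_mul_choose_eq]
          push_cast at hc
          have h2 : (-1:ℚ)^(k+1) * ((m'+1).choose (k+1)) * ((k:ℚ)+1)^(j+1)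
              = (-1:ℚ)^(k+1) * ((((m'+1).choose (k+1)) : ℚ) * ((k:ℚ)+1)) * ((k:ℚ)+1)^j := by
            ring
          rw [h2, hc]
          ring
        rw [Finset.sum_congr rfl this]
        simp
      rw [hrec, hF, alt_shift j m']
      have ih1 := ih (m'+1)
      have ih2 := ih m'
      have hfac : ((m'+1).factorial : ℚ) = (m'+1) * (m'.factorial : ℚ) := by
        rw [Nat.factorial_succ]; push_cast; ring
      rw [hfac] at ih1 ⊢
      have hm1 : (-1:ℚ)^(m'+1) = -(-1:ℚ)^m' := by ring
      rw [hm1] at ih1 ⊢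
      nlinarith [ih1, ih2]

lemma alt_sum_choose_mul (m : ℕ) :
    ∑ k ∈ range (m+1), (-1:ℚ)^k * m.choose k * k = if m = 1 then -1 else 0 := by
  cases m with
  | zero => simp
  | succ m' =>
    rw [Finset.sum_range_succ']
    have h : ∀ k ∈ range (m'+1),
        (-1:ℚ)^(k+1) * ((m'+1).choose (k+1)) * ((k+1 : ℕ) : ℚ)
          = -((m'+1) * ((-1:ℚ)^k * (m'.choose k))) := by
      intro k _
      have hc : (((m'+1).choose (k+1) * (k+1) : ℕ) : ℚ)
          = (((m'+1) * m'.choose k : ℕ) : ℚ) := by rw [← Nat.add_one_mul_choose_eq]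
      push_cast at hc
      have h2 : (-1:ℚ)^(k+1) * ((m'+1).choose (k+1)) * ((k:ℚ)+1)
          = (-1:ℚ)^(k+1) * ((((m'+1).choose (k+1)) : ℚ) * ((k:ℚ)+1)) := by ring
      push_cast
      rw [h2, hc]
      ring
    rw [Finset.sum_congr rfl h]
    simp only [Nat.cast_zero, mul_zero, add_zero]
    have e : ∑ x ∈ range (m'+1), -(((m':ℚ)+1) * ((-1:ℚ)^x * (m'.choose x)))
        = -(((m':ℚ)+1) * ∑ x ∈ range (m'+1), (-1:ℚ)^x * (m'.choose x)) := by
      rw [Finset.mul_sum, ← Finset.sum_neg_distrib]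
    rw [e, alt_sum_choose m']
    rcases Nat.eq_zero_or_pos m' with h0 | h0
    · subst h0; norm_num
    · have h1 : m' ≠ 0 := by omega
      have h2 : m' + 1 ≠ 1 := by omega
      simp [h1, h2]

lemma G_rec (m s : ℕ) :
    ∑ k ∈ range (m+2), (-1:ℚ)^k * ((m+1).choose k) * ((2*k).choose (s+2))
      = -(2 * (∑ k ∈ range (m+1), (-1:ℚ)^k * (m.choose k) * ((2*k).choose (s+1)))
          + ∑ k ∈ range (m+1), (-1:ℚ)^k * (m.choose k) * ((2*k).choose s)) := by
  have hd : ∑ k ∈ range (m+1), (-1:ℚ)^k * (m.choose (k+1)) * ((2*(k+1)).choose (s+2))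
      = -(∑ k ∈ range (m+1), (-1:ℚ)^k * (m.choose k) * ((2*k).choose (s+2))) := by
    have h1 := Finset.sum_range_succ'
      (fun k => (-1:ℚ)^k * (m.choose k) * ((2*k).choose (s+2))) (m+1)
    rw [Finset.sum_range_succ _ (m+1), Nat.choose_succ_self] at h1
    simp only [Nat.cast_zero, mul_zero, zero_mul, add_zero, pow_zero, one_mul,
      Nat.mul_zero, Nat.choose_zero_succ, Nat.cast_ofNat, mul_one] at h1
    have h2 : ∀ k ∈ range (m+1),
        (-1:ℚ)^(k+1) * (m.choose (k+1)) * ((2*(k+1)).choose (s+2))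
          = -((-1:ℚ)^k * (m.choose (k+1)) * ((2*(k+1)).choose (s+2))) := by
      intro k _; ring
    rw [Finset.sum_congr rfl h2, Finset.sum_neg_distrib] at h1
    linarith [h1]
  have hexp : ∀ k : ℕ, (((2*(k+1)).choose (s+2) : ℕ) : ℚ)
      = ((2*k).choose s : ℚ) + 2*((2*k).choose (s+1) : ℚ) + ((2*k).choose (s+2) : ℚ) := by
    intro k
    have e1 : 2*(k+1) = (2*k+1)+1 := by ring
    rw [e1]
    simp only [Nat.choose_succ_succ]
    push_cast
    ring
  have hstep := Finset.sum_range_succ'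
    (fun k => (-1:ℚ)^k * ((m+1).choose k) * ((2*k).choose (s+2))) (m+1)
  simp only [Nat.mul_zero, Nat.choose_zero_succ, Nat.cast_zero, mul_zero] at hstep
  rw [add_zero] at hstep
  rw [hstep]
  have hterm : ∀ k ∈ range (m+1),
      (-1:ℚ)^(k+1) * (((m+1).choose (k+1) : ℕ) : ℚ) * (((2*(k+1)).choose (s+2) : ℕ) : ℚ)
        = -((-1:ℚ)^k * (m.choose k) * ((2*k).choose s))
          - 2*((-1:ℚ)^k * (m.choose k) * ((2*k).choose (s+1)))
          - ((-1:ℚ)^k * (m.choose k) * ((2*k).choose (s+2)))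
          - ((-1:ℚ)^k * (m.choose (k+1)) * ((2*(k+1)).choose (s+2))) := by
    intro k _
    have hp : (((m+1).choose (k+1) : ℕ) : ℚ) = (m.choose k : ℚ) + (m.choose (k+1) : ℚ) := by
      rw [Nat.choose_succ_succ]; push_cast; ring
    rw [hp, hexp k]
    ring
  rw [Finset.sum_congr rfl hterm]
  simp only [Finset.sum_sub_distrib, Finset.sum_neg_distrib, ← Finset.mul_sum]
  rw [hd]
  ring

lemma chooseE : ∀ m r : ℕ,
    (∑ k ∈ range (m+1), (-1:ℚ)^k * m.choose k * ((2*k).choose r)) * 2^r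
      = (-1:ℚ)^m * (if m ≤ r then (2:ℚ)^(2*m) * (m.choose (r-m)) else 0) := by
  intro m
  induction m with
  | zero =>
    intro r
    cases r with
    | zero => simp
    | succ r' => simp [Nat.choose_zero_succ]
  | succ m ih =>
    intro r
    match r with
    | 0 =>
      have h : ∀ k ∈ range (m+2), (-1:ℚ)^k * ((m+1).choose k) * ((2*k).choose 0)
          = (-1:ℚ)^k * ((m+1).choose k) := by
        intro k _; simp
      rw [Finset.sum_congr rfl h, alt_sum_choose (m+1)]
      simp
    | 1 =>
      have h : ∀ k ∈ range (m+2), (-1:ℚ)^k * ((m+1).choose k) * ((2*k).choose 1)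
          = 2 * ((-1:ℚ)^k * ((m+1).choose k) * k) := by
        intro k _
        rw [Nat.choose_one_right]
        push_cast; ring
      rw [Finset.sum_congr rfl h, ← Finset.mul_sum, alt_sum_choose_mul (m+1)]
      rcases Nat.eq_zero_or_pos m with h0 | h0
      · subst h0; norm_num
      · have h1 : m + 1 ≠ 1 := by omega
        have h2 : ¬ (m + 1 ≤ 1) := by omega
        simp [h1, h2, show m ≠ 0 by omega]
    | (s+2) =>
      rw [G_rec m s]
      have e1 := ih (s+1)
      have e0 := ih s
      have key : (if m+1 ≤ s+2 then (2:ℚ)^(2*(m+1)) * (((m+1).choose (s+2-(m+1)) : ℕ) : ℚ) else 0)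
          = 4*((if m ≤ s+1 then (2:ℚ)^(2*m) * ((m.choose (s+1-m) : ℕ) : ℚ) else 0)
             + (if m ≤ s then (2:ℚ)^(2*m) * ((m.choose (s-m) : ℕ) : ℚ) else 0)) := by
        by_cases hms : m ≤ s
        · have h1 : m+1 ≤ s+2 := by omega
          have h2 : m ≤ s+1 := by omega
          rw [if_pos h1, if_pos h2, if_pos hms]
          have e3 : s+2-(m+1) = (s-m)+1 := by omega
          have e4 : s+1-m = (s-m)+1 := by omega
          rw [e3, e4, Nat.choose_succ_succ]
          have e5 : 2*(m+1) = 2*m+2 := by ring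
          rw [e5, pow_add]
          push_cast; ring
        · by_cases hm1 : m = s+1
          · subst hm1
            have h1 : s+1+1 ≤ s+2 := by omega
            have h2 : s+1 ≤ s+1 := le_refl _
            rw [if_pos h1, if_pos h2, if_neg hms]
            have e3 : s+2-(s+1+1) = 0 := by omega
            have e4 : s+1-(s+1) = 0 := by omega
            rw [e3, e4]
            simp only [Nat.choose_zero_right, Nat.cast_one]
            have e5 : 2*(s+1+1) = 2*(s+1)+2 := by ring
            rw [e5, pow_add]
            push_cast; ring
          · have h1 : ¬ (m+1 ≤ s+2) := by omega
            have h2 : ¬ (m ≤ s+1) := by omega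
            rw [if_neg h1, if_neg h2, if_neg hms]
            ring
      rw [key]
      linear_combination (-4 : ℚ) * e1 + (-4 : ℚ) * e0

lemma gchoose_add_nat (x : ℚ) (c n : ℕ) :
    gchoose (x + c) n = ∑ r ∈ range (n+1), gchoose x r * ((c.choose (n - r) : ℕ) : ℚ) := by
  rw [gchoose_eq_choose, Ring.add_choose_eq n (Commute.all _ _),
    Finset.Nat.sum_antidiagonal_eq_sum_range_succ_mk]
  exact Finset.sum_congr rfl fun r _ => by
    rw [gchoose_eq_choose, Ring.choose_natCast]

lemma stirling2_alt' (j m : ℕ) :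
    (stirling2 j m : ℚ)
      = (m.factorial:ℚ)⁻¹ * ∑ k ∈ range (m+1), (-1:ℚ)^(m+k) * m.choose k * (k:ℚ)^j := by
  have h := stirling2_alt j m
  have hf : (m.factorial:ℚ) ≠ 0 := by positivity
  have h2 : ∑ k ∈ range (m+1), (-1:ℚ)^(m+k) * m.choose k * (k:ℚ)^j
      = (-1:ℚ)^m * ∑ k ∈ range (m+1), (-1:ℚ)^k * m.choose k * (k:ℚ)^j := by
    rw [Finset.mul_sum]; exact Finset.sum_congr rfl fun k _ => by rw [pow_add]; ring
  rw [h2, ← h, inv_mul_cancel_left₀ hf]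

lemma stirling1_alt' (n m : ℕ) (y : ℚ) :
    ∑ i ∈ range (n+1), (-1:ℚ)^(m+i) * stirling1 n i * y^i
      = (-1:ℚ)^(m+n) * n.factorial * gchoose y n := by
  have h := stirling1_alt n y
  have h2 : ∑ i ∈ range (n+1), (-1:ℚ)^(m+i) * stirling1 n i * y^i
      = (-1:ℚ)^m * ∑ i ∈ range (n+1), (-1:ℚ)^i * stirling1 n i * y^i := by
    rw [Finset.mul_sum]; exact Finset.sum_congr rfl fun i _ => by rw [pow_add]; ring
  rw [h2, h, pow_add]; ring

lemma inner_eval (i m : ℕ) (l : ℚ) :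
    ∑ j ∈ range (i+1), (i.choose j : ℚ) * (stirling2 j m : ℚ) * l^(i-j) * 2^j
      = (m.factorial : ℚ)⁻¹
          * ∑ k ∈ range (m+1), (-1:ℚ)^(m+k) * m.choose k * (2*(k:ℚ) + l)^i := by
  calc ∑ j ∈ range (i+1), (i.choose j : ℚ) * (stirling2 j m : ℚ) * l^(i-j) * 2^j
      = ∑ j ∈ range (i+1), ∑ k ∈ range (m+1),
          (m.factorial:ℚ)⁻¹ * ((-1:ℚ)^(m+k) * m.choose k
            * ((2*(k:ℚ))^j * l^(i-j) * i.choose j)) := by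
        refine Finset.sum_congr rfl fun j _ => ?_
        rw [stirling2_alt' j m]
        simp only [Finset.mul_sum, Finset.sum_mul]
        exact Finset.sum_congr rfl fun k _ => by ring
    _ = ∑ k ∈ range (m+1), ∑ j ∈ range (i+1),
          (m.factorial:ℚ)⁻¹ * ((-1:ℚ)^(m+k) * m.choose k
            * ((2*(k:ℚ))^j * l^(i-j) * i.choose j)) := Finset.sum_comm
    _ = ∑ k ∈ range (m+1), (m.factorial:ℚ)⁻¹
          * ((-1:ℚ)^(m+k) * m.choose k * (2*(k:ℚ) + l)^i) := by
        refine Finset.sum_congr rfl fun k _ => ?_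
        rw [← Finset.mul_sum, ← Finset.mul_sum, add_pow]
    _ = (m.factorial : ℚ)⁻¹
          * ∑ k ∈ range (m+1), (-1:ℚ)^(m+k) * m.choose k * (2*(k:ℚ) + l)^i := by
        rw [Finset.mul_sum]

theorem stmt16 (m n : ℕ) (hm : 1 ≤ m) (hmn : m ≤ n) (l : ℚ) :
    ∑ i ∈ Finset.Icc m n, ∑ j ∈ Finset.Icc m i,
        (-1 : ℚ) ^ (m + i) * stirling1 n i * i.choose j * stirling2 j m *
          l ^ (i - j) * 2 ^ (j - m) =
      (n.factorial : ℚ) / m.factorial * (-1 : ℚ) ^ (m + n) *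
        ∑ x ∈ Finset.Icc m n, gchoose l (n - x) * m.choose (x - m) *
          (2 : ℚ) ^ ((m : ℤ) - x) := by
  have hfm : (m.factorial : ℚ) ≠ 0 := by positivity
  have hLHS : ∑ i ∈ Finset.Icc m n, ∑ j ∈ Finset.Icc m i,
        (-1 : ℚ) ^ (m + i) * stirling1 n i * i.choose j * stirling2 j m *
          l ^ (i - j) * 2 ^ (j - m)
      = (-1:ℚ)^(m+n) * (n.factorial : ℚ) * ((m.factorial : ℚ))⁻¹ *
          ∑ r ∈ range (n+1), gchoose l r *
            (if m ≤ n - r then ((m.choose (n-r-m) : ℕ) : ℚ) * (2:ℚ)^m * ((2:ℚ)^(n-r))⁻¹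
             else 0) := by
    calc ∑ i ∈ Finset.Icc m n, ∑ j ∈ Finset.Icc m i,
          (-1 : ℚ) ^ (m + i) * stirling1 n i * i.choose j * stirling2 j m *
            l ^ (i - j) * 2 ^ (j - m)
        = ∑ i ∈ Finset.Icc m n, ∑ j ∈ Finset.Icc m i,
            (-1:ℚ)^(m+i) * stirling1 n i
              * ((i.choose j : ℚ) * stirling2 j m * l^(i-j) * 2^j) * ((2:ℚ)^m)⁻¹ := by
          refine Finset.sum_congr rfl fun i _ => Finset.sum_congr rfl fun j hj => ?_
          rw [Finset.mem_Icc] at hj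
          rw [pow_sub₀ (2:ℚ) two_ne_zero hj.1]
          ring
      _ = ∑ i ∈ Finset.Icc m n, ∑ j ∈ range (i+1),
            (-1:ℚ)^(m+i) * stirling1 n i
              * ((i.choose j : ℚ) * stirling2 j m * l^(i-j) * 2^j) * ((2:ℚ)^m)⁻¹ := by
          refine Finset.sum_congr rfl fun i _ => ?_
          refine Finset.sum_subset (fun j hj => ?_) (fun j hj hj2 => ?_)
          · rw [Finset.mem_Icc] at hj; rw [Finset.mem_range]; omega
          · rw [Finset.mem_range] at hj; rw [Finset.mem_Icc] at hj2
            rw [stirling2_eq_zero (show j < m by omega)]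
            simp
      _ = ∑ i ∈ range (n+1), ∑ j ∈ range (i+1),
            (-1:ℚ)^(m+i) * stirling1 n i
              * ((i.choose j : ℚ) * stirling2 j m * l^(i-j) * 2^j) * ((2:ℚ)^m)⁻¹ := by
          refine Finset.sum_subset (fun i hi => ?_) (fun i hi hi2 => ?_)
          · rw [Finset.mem_Icc] at hi; rw [Finset.mem_range]; omega
          · rw [Finset.mem_range] at hi; rw [Finset.mem_Icc] at hi2
            refine Finset.sum_eq_zero fun j hj => ?_
            rw [Finset.mem_range] at hj
            rw [stirling2_eq_zero (show j < m by omega)]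
            simp
      _ = ∑ i ∈ range (n+1), ∑ k ∈ range (m+1),
            ((2:ℚ)^m)⁻¹ * (m.factorial:ℚ)⁻¹ * ((-1:ℚ)^(m+k) * m.choose k)
              * ((-1:ℚ)^(m+i) * stirling1 n i * (2*(k:ℚ)+l)^i) := by
          refine Finset.sum_congr rfl fun i _ => ?_
          rw [← Finset.sum_mul, ← Finset.mul_sum, inner_eval i m l, Finset.mul_sum,
            Finset.mul_sum, Finset.sum_mul]
          exact Finset.sum_congr rfl fun k _ => by ring
      _ = ∑ k ∈ range (m+1),
            ((2:ℚ)^m)⁻¹ * (m.factorial:ℚ)⁻¹ * ((-1:ℚ)^(m+k) * m.choose k)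
              * ((-1:ℚ)^(m+n) * n.factorial * gchoose (2*(k:ℚ)+l) n) := by
          rw [Finset.sum_comm]
          refine Finset.sum_congr rfl fun k _ => ?_
          rw [← Finset.mul_sum, stirling1_alt' n m (2*(k:ℚ)+l)]
      _ = ∑ k ∈ range (m+1), ∑ r ∈ range (n+1),
            ((2:ℚ)^m)⁻¹ * (m.factorial:ℚ)⁻¹ * (-1:ℚ)^(m+k) * (-1:ℚ)^(m+n)
              * (n.factorial:ℚ) * (m.choose k:ℚ) * gchoose l r
              * (((2*k).choose (n-r) : ℕ) : ℚ) := by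
          refine Finset.sum_congr rfl fun k _ => ?_
          have hcast : 2*(k:ℚ)+l = l + ((2*k : ℕ) : ℚ) := by push_cast; ring
          rw [hcast, gchoose_add_nat l (2*k) n]
          simp only [Finset.mul_sum]
          exact Finset.sum_congr rfl fun r _ => by ring
      _ = (-1:ℚ)^(m+n) * (n.factorial : ℚ) * ((m.factorial : ℚ))⁻¹ *
            ∑ r ∈ range (n+1), gchoose l r *
              (if m ≤ n - r then ((m.choose (n-r-m) : ℕ) : ℚ) * (2:ℚ)^m * ((2:ℚ)^(n-r))⁻¹
               else 0) := by
          rw [Finset.sum_comm, Finset.mul_sum]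
          refine Finset.sum_congr rfl fun r _ => ?_
          have h := chooseE m (n-r)
          have hp : ((2:ℚ)^(n-r)) ≠ 0 := by positivity
          have hsq : (-1:ℚ)^m * (-1:ℚ)^m = 1 := by
            rw [← pow_add]
            exact Even.neg_one_pow ⟨m, rfl⟩
          have hpw : ∀ k : ℕ, (-1:ℚ)^(m+k) * (-1:ℚ)^(m+n) = (-1:ℚ)^k * (-1:ℚ)^n := by
            intro k
            rw [pow_add, pow_add]
            linear_combination ((-1:ℚ)^k * (-1:ℚ)^n) * hsq
          have h2 : ∑ k ∈ range (m+1), (-1:ℚ)^k * m.choose k * (((2*k).choose (n-r) : ℕ) : ℚ)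
              = ((-1:ℚ)^m * (if m ≤ n-r then (2:ℚ)^(2*m) * ((m.choose (n-r-m) : ℕ) : ℚ) else 0))
                  * ((2:ℚ)^(n-r))⁻¹ := by
            rw [eq_mul_inv_iff_mul_eq₀ hp]
            exact h
          have hsum : ∑ k ∈ range (m+1),
              ((2:ℚ)^m)⁻¹ * (m.factorial:ℚ)⁻¹ * (-1:ℚ)^(m+k) * (-1:ℚ)^(m+n)
                * (n.factorial:ℚ) * (m.choose k:ℚ) * gchoose l r
                * (((2*k).choose (n-r) : ℕ) : ℚ)
              = ((2:ℚ)^m)⁻¹ * (m.factorial:ℚ)⁻¹ * (-1:ℚ)^n * (n.factorial:ℚ)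
                  * gchoose l r *
                    ∑ k ∈ range (m+1), (-1:ℚ)^k * m.choose k * (((2*k).choose (n-r) : ℕ) : ℚ) := by
            rw [Finset.mul_sum]
            refine Finset.sum_congr rfl fun k _ => ?_
            linear_combination (((2:ℚ)^m)⁻¹ * (m.factorial:ℚ)⁻¹ * (n.factorial:ℚ)
              * (m.choose k:ℚ) * gchoose l r * (((2*k).choose (n-r) : ℕ) : ℚ)) * hpw k
          rw [hsum, h2]
          by_cases hc : m ≤ n - r
          · rw [if_pos hc, if_pos hc]
            have h4 : (2:ℚ)^(2*m) = 2^m * 2^m := by rw [two_mul, pow_add]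
            have h5 : (-1:ℚ)^(m+n) = (-1:ℚ)^m * (-1:ℚ)^n := pow_add _ _ _
            rw [h4, h5]
            field_simp
          · rw [if_neg hc, if_neg hc]; ring
  have hRHS : ∑ x ∈ Finset.Icc m n, gchoose l (n - x) * (m.choose (x - m) : ℚ) *
          (2 : ℚ) ^ ((m : ℤ) - x)
      = ∑ r ∈ range (n+1), gchoose l r *
          (if m ≤ n - r then ((m.choose (n-r-m) : ℕ) : ℚ) * (2:ℚ)^m * ((2:ℚ)^(n-r))⁻¹
           else 0) := by
    have h1 : ∑ x ∈ Finset.Icc m n, gchoose l (n - x) * (m.choose (x - m) : ℚ) *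
            (2 : ℚ) ^ ((m : ℤ) - x)
        = ∑ x ∈ range (n+1), (if m ≤ x then gchoose l (n - x) * (m.choose (x - m) : ℚ) *
            (2 : ℚ) ^ ((m : ℤ) - x) else 0) := by
      rw [← Finset.sum_filter]
      apply Finset.sum_congr _ (fun _ _ => rfl)
      ext x
      simp only [Finset.mem_Icc, Finset.mem_filter, Finset.mem_range]
      omega
    have h2 := Finset.sum_range_reflect
      (fun x => if m ≤ x then gchoose l (n - x) * (m.choose (x - m) : ℚ) *
        (2 : ℚ) ^ ((m : ℤ) - x) else 0) (n+1)
    simp only [Nat.add_sub_cancel] at h2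
    rw [h1, ← h2]
    refine Finset.sum_congr rfl fun r hr => ?_
    rw [Finset.mem_range] at hr
    by_cases hc : m ≤ n - r
    · rw [if_pos hc, if_pos hc]
      have e1 : n - (n - r) = r := by omega
      rw [e1]
      have e2 : (2:ℚ) ^ ((m : ℤ) - ((n - r : ℕ) : ℤ)) = (2:ℚ)^m * ((2:ℚ)^(n-r))⁻¹ := by
        rw [zpow_sub₀ two_ne_zero, zpow_natCast, zpow_natCast, div_eq_mul_inv]
      rw [e2]
      ring
    · rw [if_neg hc, if_neg hc]
      ring
  rw [hLHS, hRHS, div_eq_mul_inv]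
  ring
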